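/- arXiv:1707.07456 — 2 statements merged into one kernel-verified Lean document; each statement's English description precedes it below -/
import Mathlib

section
/- Let A ⊆ ℝⁿ be a compact set that is a tubular neighborhood, i.e. A = B(K, r) for some closed set K ⊆ A and r > 0. Then for every boundary point x ∈ ∂A and every sufficiently small s > 0, there exists a closed ball of radius s/2 contained in A and containing x, and consequently the n-dimensional lower density of A at x satisfies Θⁿ(A, x) ≥ 2^{-n}. -/
open Metric MeasureTheory Filter

/-- If a compact set `A ⊆ ℝⁿ` is a tubular neighborhood, i.e. `A = B(K,r)` for a closed
set `K ⊆ A` and `r > 0`, then every boundary point `x ∈ ∂A` lies, for every sufficiently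
small `s > 0`, in a closed ball of radius `s/2` contained in `A`, and consequently the
`n`-dimensional lower density of `A` at `x` is at least `2⁻ⁿ`. -/
theorem stmt_1 (n : ℕ) (A K : Set (EuclideanSpace ℝ (Fin n)))
    (hA : IsCompact A) (hK : IsClosed K) (hKA : K ⊆ A) (r : ℝ) (hr : 0 < r)
    (hAeq : A = {x | Metric.infDist x K ≤ r}) :
    ∀ x ∈ frontier A,
      (∃ s₀ > 0, ∀ s, 0 < s → s ≤ s₀ →
        ∃ c, x ∈ Metric.closedBall c (s / 2) ∧ Metric.closedBall c (s / 2) ⊆ A) ∧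
      ENNReal.ofReal ((2 : ℝ)⁻¹ ^ n) ≤
        Filter.liminf
          (fun ρ => volume (A ∩ Metric.closedBall x ρ) / volume (Metric.closedBall x ρ))
          (nhdsWithin (0 : ℝ) (Set.Ioi 0)) := by
  intro x hx
  have hAcl : IsClosed A := hA.isClosed
  have hxA : x ∈ A := hAcl.frontier_subset hx
  -- K is nonempty, otherwise A = univ and the frontier is empty
  rcases K.eq_empty_or_nonempty with hKe | hKne
  · exfalso
    have hAu : A = Set.univ := by
      ext y; simp [hAeq, hKe, Metric.infDist_empty, hr.le]
    rw [hAu, frontier_univ] at hx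
    exact hx
  obtain ⟨k, hkK, hk⟩ := hK.exists_infDist_eq_dist hKne x
  -- infDist x K = r
  have hd : Metric.infDist x K = r := by
    have hle : Metric.infDist x K ≤ r := by
      have := hxA; rw [hAeq] at this; exact this
    rcases lt_or_eq_of_le hle with hlt | heq
    · exfalso
      have hni : x ∉ interior A := fun h => hx.2 h
      apply hni
      rw [mem_interior]
      refine ⟨Metric.ball x (r - Metric.infDist x K), ?_, isOpen_ball,
        mem_ball_self (by linarith)⟩
      intro y hy
      rw [hAeq]
      have h1 : Metric.infDist y K ≤ Metric.infDist x K + dist y x :=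
        Metric.infDist_le_infDist_add_dist
      have h2 : dist y x < r - Metric.infDist x K := mem_ball.mp hy
      simp only [Set.mem_setOf_eq]
      linarith
    · exact heq
  have hxk : dist x k = r := hk.symm.trans hd
  -- the key geometric construction
  have key : ∀ s, 0 < s → s ≤ 2*r →
      ∃ c, x ∈ closedBall c (s/2) ∧ closedBall c (s/2) ⊆ A := by
    intro s hs hs2
    set t := s / (2*r) with ht
    have ht0 : 0 ≤ t := by positivity
    have ht1 : t ≤ 1 := by
      rw [ht, div_le_one (by positivity)]; exact hs2
    have htr : t * r = s / 2 := by
      rw [ht]; field_simp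
    refine ⟨x + t • (k - x), ?_, ?_⟩
    · have hc1 : dist x (x + t • (k - x)) = t * r := by
        rw [dist_eq_norm]
        have hxx : x - (x + t • (k - x)) = t • (x - k) := by module
        rw [hxx, norm_smul, Real.norm_of_nonneg ht0, ← dist_eq_norm, hxk]
      rw [mem_closedBall, hc1, htr]
    · have hc2 : dist (x + t • (k - x)) k = (1 - t) * r := by
        rw [dist_eq_norm]
        have hxx : x + t • (k - x) - k = (1 - t) • (x - k) := by module
        rw [hxx, norm_smul, Real.norm_of_nonneg (by linarith), ← dist_eq_norm, hxk]
      intro y hy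
      rw [hAeq]
      have h1 : Metric.infDist y K ≤ dist y k := Metric.infDist_le_dist_of_mem hkK
      have h2 : dist y k ≤ dist y (x + t • (k - x)) + dist (x + t • (k - x)) k :=
        dist_triangle _ _ _
      have h3 : dist y (x + t • (k - x)) ≤ s / 2 := mem_closedBall.mp hy
      have h4 : (1 - t) * r = r - t * r := by ring
      simp only [Set.mem_setOf_eq]
      linarith [htr]
  refine ⟨⟨2*r, by positivity, fun s hs hs2 => key s hs hs2⟩, ?_⟩
  -- eventual lower bound on the density ratio
  have hev : ∀ᶠ ρ in nhdsWithin (0:ℝ) (Set.Ioi 0),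
      ENNReal.ofReal ((2:ℝ)⁻¹ ^ n) ≤
        volume (A ∩ closedBall x ρ) / volume (closedBall x ρ) := by
    filter_upwards [self_mem_nhdsWithin,
      mem_nhdsWithin_of_mem_nhds (Iio_mem_nhds (show (0:ℝ) < 2*r by positivity))]
      with ρ hρ hρ2
    have hρ0 : (0:ℝ) < ρ := hρ
    obtain ⟨c, hxc, hcA⟩ := key ρ hρ0 (le_of_lt hρ2)
    have hsub : closedBall c (ρ/2) ⊆ A ∩ closedBall x ρ := by
      intro y hy
      refine ⟨hcA hy, ?_⟩
      have h1 : dist y c ≤ ρ/2 := mem_closedBall.mp hy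
      have h2 : dist c x ≤ ρ/2 := by
        rw [dist_comm]; exact mem_closedBall.mp hxc
      exact mem_closedBall.mpr (le_trans (dist_triangle y c x) (by linarith))
    rw [ENNReal.le_div_iff_mul_le
      (Or.inl (measure_closedBall_pos volume x hρ0).ne')
      (Or.inl measure_closedBall_lt_top.ne)]
    calc ENNReal.ofReal ((2:ℝ)⁻¹ ^ n) * volume (closedBall x ρ)
        = volume (closedBall c (ρ/2)) := by
          rw [Measure.addHaar_closedBall volume x hρ0.le,
            Measure.addHaar_closedBall volume c (by positivity : (0:ℝ) ≤ ρ/2)]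
          rw [← mul_assoc, ← ENNReal.ofReal_mul (by positivity)]
          congr 2
          have hfr : Module.finrank ℝ (EuclideanSpace ℝ (Fin n)) = n :=
            finrank_euclideanSpace_fin
          rw [hfr, div_pow, inv_pow]
          ring
      _ ≤ volume (A ∩ closedBall x ρ) := measure_mono hsub
  exact Filter.le_liminf_of_le (h := hev)
end

section
/- Let x : [τ₀, τ] → ℝⁿ be Lipschitz with constant C, and let t > τ₀ be such that for all s ∈ [τ₀, τ] one has (t-s)² + |x(τ₀) - x(s)|² ≥ (t - τ₀)². Then C² ≥ 1 + 2(t-s)/(s-τ₀) for all s ∈ (τ₀, min(t,τ)], and hence no such t > τ₀ can exist if t is close enough to τ₀; i.e., the assumption forces t ≤ τ₀. -/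
open Set

/-- If `x : [τ₀,τ] → ℝⁿ` is Lipschitz with constant `C` and `t > τ₀` is such that
`(t-s)² + ‖x(τ₀) - x(s)‖² ≥ (t-τ₀)²` for all `s ∈ [τ₀,τ]` (with `τ₀ < τ`), then
`C² ≥ 1 + 2(t-s)/(s-τ₀)` for every `s ∈ (τ₀, min t τ]`; since this is impossible,
no such `t > τ₀` exists, i.e. the assumptions are contradictory. -/
theorem stmt_3 (n : ℕ) (τ₀ τ : ℝ) (hττ : τ₀ < τ) (C : NNReal) (hC : (0 : ℝ) < C)
    (x : ℝ → EuclideanSpace ℝ (Fin n))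
    (hx : LipschitzOnWith C x (Set.Icc τ₀ τ))
    (t : ℝ) (ht : τ₀ < t)
    (hdist : ∀ s ∈ Set.Icc τ₀ τ,
      (t - τ₀) ^ 2 ≤ (t - s) ^ 2 + ‖x τ₀ - x s‖ ^ 2) :
    (∀ s ∈ Set.Ioc τ₀ (min t τ), 1 + 2 * (t - s) / (s - τ₀) ≤ (C : ℝ) ^ 2) ∧ False := by
  have main : ∀ s ∈ Set.Ioc τ₀ (min t τ), 1 + 2 * (t - s) / (s - τ₀) ≤ (C : ℝ) ^ 2 := by
    intro s hs
    obtain ⟨hs1, hs2⟩ := hs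
    have hst : s ≤ t := hs2.trans (min_le_left _ _)
    have hsτ : s ≤ τ := hs2.trans (min_le_right _ _)
    have hsmem : s ∈ Set.Icc τ₀ τ := ⟨hs1.le, hsτ⟩
    have h0mem : τ₀ ∈ Set.Icc τ₀ τ := ⟨le_rfl, hττ.le⟩
    have hp : 0 < s - τ₀ := by linarith
    have hlip : dist (x τ₀) (x s) ≤ (C : ℝ) * dist τ₀ s := hx.dist_le_mul _ h0mem _ hsmem
    have hd : dist τ₀ s = s - τ₀ := by rw [Real.dist_eq, abs_sub_comm, abs_of_pos hp]
    rw [hd, dist_eq_norm] at hlip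
    have hnorm : ‖x τ₀ - x s‖ ^ 2 ≤ ((C : ℝ) * (s - τ₀)) ^ 2 := by
      have h1 : 0 ≤ ‖x τ₀ - x s‖ := norm_nonneg _
      nlinarith
    have hd2 := hdist s hsmem
    have key : (s - τ₀) ^ 2 + 2 * (t - s) * (s - τ₀) ≤ (C : ℝ) ^ 2 * (s - τ₀) ^ 2 := by
      nlinarith
    have hq : 2 * (t - s) / (s - τ₀) * (s - τ₀) = 2 * (t - s) :=
      div_mul_cancel₀ _ hp.ne'
    nlinarith [mul_pos hp hp, hq, key]
  refine ⟨main, ?_⟩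
  set δ : ℝ := min (t - τ₀) (τ - τ₀) with hδ
  have hδpos : 0 < δ := lt_min (by linarith) (by linarith)
  have hC2 : 0 < (C : ℝ) ^ 2 := pow_pos hC 2
  set ε : ℝ := min (δ / 2) ((t - τ₀) / (C : ℝ) ^ 2) with hε
  have hεpos : 0 < ε := lt_min (by linarith) (div_pos (by linarith) hC2)
  set s : ℝ := τ₀ + ε with hsdef
  have hεδ : ε ≤ δ / 2 := min_le_left _ _
  have hεC : ε ≤ (t - τ₀) / (C : ℝ) ^ 2 := min_le_right _ _
  have hδt : δ ≤ t - τ₀ := min_le_left _ _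
  have hδτ : δ ≤ τ - τ₀ := min_le_right _ _
  have hsmem : s ∈ Set.Ioc τ₀ (min t τ) := by
    constructor
    · simp [hsdef]; linarith
    · apply le_min <;> simp [hsdef] <;> linarith
  have hmain := main s hsmem
  have hsp : s - τ₀ = ε := by simp [hsdef]
  rw [hsp] at hmain
  have hts : t - s ≥ (t - τ₀) / 2 := by simp [hsdef]; linarith
  -- 2*(t-s)/ε ≥ (t-τ₀)/ε ≥ C^2, so 1 + ... > C^2, contradiction
  have h1 : (t - τ₀) ≤ 2 * (t - s) := by linarith
  have h2 : (C : ℝ) ^ 2 ≤ (t - τ₀) / ε := by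
    rw [le_div_iff₀ hεpos]
    calc (C : ℝ) ^ 2 * ε ≤ (C : ℝ) ^ 2 * ((t - τ₀) / (C : ℝ) ^ 2) := by
          exact mul_le_mul_of_nonneg_left hεC hC2.le
      _ = t - τ₀ := by field_simp
  have h3 : (t - τ₀) / ε ≤ 2 * (t - s) / ε := by gcongr
  linarith
end
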